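/- Uniqueness of sparse representations under low coherence: if Q ∈ ℝ^{d×k} has unit-norm columns with mutual coherence M, and s, s' ∈ ℝ^k satisfy Qs = Qs' with ‖s‖₀ + ‖s'‖₀ < 1 + 1/M (assuming M > 0), then s = s'. -/

import Mathlib

open scoped RealInnerProductSpace

noncomputable def matCol {d k : ℕ} (Q : Matrix (Fin d) (Fin k) ℝ) (j : Fin k) :
    EuclideanSpace ℝ (Fin d) := WithLp.toLp 2 (fun i => Q i j)

noncomputable def mutualCoherenceU {d k : ℕ} (Q : Matrix (Fin d) (Fin k) ℝ) : ℝ :=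
  sSup {x : ℝ | ∃ i j : Fin k, i ≠ j ∧ x = |⟪matCol Q i, matCol Q j⟫|}

/-- Number of nonzero entries (the `ℓ₀` "norm"). -/
noncomputable def l0norm {k : ℕ} (s : Fin k → ℝ) : ℕ := (Finset.univ.filter fun j => s j ≠ 0).card

theorem sparse_representation_unique {d k : ℕ} (Q : Matrix (Fin d) (Fin k) ℝ)
    (hunit : ∀ j, ‖matCol Q j‖ = 1) (hM : 0 < mutualCoherenceU Q)
    (s s' : Fin k → ℝ) (heq : Q.mulVec s = Q.mulVec s')
    (hsparse : (l0norm s : ℝ) + (l0norm s' : ℝ) < 1 + 1 / mutualCoherenceU Q) :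
    s = s' := by
  set M := mutualCoherenceU Q with hMdef
  have hbdd : BddAbove {x : ℝ | ∃ i j : Fin k, i ≠ j ∧ x = |⟪matCol Q i, matCol Q j⟫|} := by
    refine ⟨1, ?_⟩
    rintro y ⟨i, j, hij, rfl⟩
    calc |⟪matCol Q i, matCol Q j⟫| ≤ ‖matCol Q i‖ * ‖matCol Q j‖ := abs_real_inner_le_norm _ _
    _ = 1 := by rw [hunit, hunit]; ring
  have hle : ∀ i j : Fin k, i ≠ j → |⟪matCol Q i, matCol Q j⟫| ≤ M := fun i j hij =>
    le_csSup hbdd ⟨i, j, hij, rfl⟩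
  by_contra hne
  set x : Fin k → ℝ := s - s' with hx
  have hx0 : x ≠ 0 := sub_ne_zero.mpr hne
  have hQx : Q.mulVec x = 0 := by
    rw [hx, Matrix.mulVec_sub, heq, sub_self]
  have hinner : ∀ i : Fin k, ∑ j, x j * ⟪matCol Q i, matCol Q j⟫ = 0 := by
    intro i
    have h0 : ∑ l, Q l i * (Q.mulVec x l) = 0 := by rw [hQx]; simp
    rw [← h0]
    simp only [Matrix.mulVec, dotProduct, PiLp.inner_apply, RCLike.inner_apply,
      conj_trivial, matCol, PiLp.toLp_apply]
    simp_rw [Finset.mul_sum]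
    rw [Finset.sum_comm]
    apply Finset.sum_congr rfl
    intro l _
    apply Finset.sum_congr rfl
    intro j _
    ring
  -- support set
  set S : Finset (Fin k) := Finset.univ.filter (fun j => x j ≠ 0) with hS
  have hSne : S.Nonempty := by
    rcases Function.ne_iff.mp hx0 with ⟨j, hj⟩
    exact ⟨j, by simp only [hS, Finset.mem_filter, Finset.mem_univ, true_and]; simpa using hj⟩
  obtain ⟨i0, hi0S, hi0max⟩ := S.exists_max_image (fun j => |x j|) hSne
  have hxi0 : x i0 ≠ 0 := by simpa [hS] using hi0S
  have habs : 0 < |x i0| := abs_pos.mpr hxi0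
  -- diagonal inner product is 1
  have hdiag : ⟪matCol Q i0, matCol Q i0⟫ = 1 := by
    rw [real_inner_self_eq_norm_sq, hunit]; ring
  have hsplit : x i0 = -∑ j ∈ Finset.univ.erase i0, x j * ⟪matCol Q i0, matCol Q j⟫ := by
    have := hinner i0
    rw [← Finset.add_sum_erase _ _ (Finset.mem_univ i0)] at this
    rw [hdiag] at this
    linarith
  have hbound : |x i0| ≤ ((S.card : ℝ) - 1) * (M * |x i0|) := by
    have hsum : |∑ j ∈ Finset.univ.erase i0, x j * ⟪matCol Q i0, matCol Q j⟫| ≤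
        ((S.card : ℝ) - 1) * (M * |x i0|) := by
      calc |∑ j ∈ Finset.univ.erase i0, x j * ⟪matCol Q i0, matCol Q j⟫|
          ≤ ∑ j ∈ Finset.univ.erase i0, |x j * ⟪matCol Q i0, matCol Q j⟫| :=
            Finset.abs_sum_le_sum_abs _ _
        _ = ∑ j ∈ S.erase i0, |x j * ⟪matCol Q i0, matCol Q j⟫| := by
            refine (Finset.sum_subset ?_ ?_).symm
            · intro j hj
              simp only [hS, Finset.mem_erase, Finset.mem_filter, Finset.mem_univ] at hj ⊢
              exact ⟨hj.1, trivial⟩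
            · intro j hj hj2
              have hji : j ≠ i0 := (Finset.mem_erase.mp hj).1
              have hxj : x j = 0 := by
                by_contra hxj
                exact hj2 (Finset.mem_erase.mpr ⟨hji, by simp [hS, hxj]⟩)
              simp [hxj]
        _ ≤ ∑ j ∈ S.erase i0, M * |x i0| := by
            apply Finset.sum_le_sum
            intro j hj
            rw [abs_mul]
            have hjS : j ∈ S := Finset.mem_of_mem_erase hj
            have hji : j ≠ i0 := Finset.ne_of_mem_erase hj
            have h1 : |x j| ≤ |x i0| := hi0max j hjS
            have h2 : |⟪matCol Q i0, matCol Q j⟫| ≤ M := hle i0 j (Ne.symm hji)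
            calc |x j| * |⟪matCol Q i0, matCol Q j⟫| ≤ |x i0| * M := by
                  apply mul_le_mul h1 h2 (abs_nonneg _) (abs_nonneg _)
              _ = M * |x i0| := mul_comm _ _
        _ = ((S.erase i0).card : ℝ) * (M * |x i0|) := by
            rw [Finset.sum_const, nsmul_eq_mul]
        _ = ((S.card : ℝ) - 1) * (M * |x i0|) := by
            rw [Finset.card_erase_of_mem hi0S]
            have : 1 ≤ S.card := Finset.card_pos.mpr hSne
            rw [Nat.cast_sub this, Nat.cast_one]
    calc |x i0| = |∑ j ∈ Finset.univ.erase i0, x j * ⟪matCol Q i0, matCol Q j⟫| := by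
          rw [hsplit, abs_neg]
      _ ≤ _ := hsum
  have h1M : 1 ≤ ((S.card : ℝ) - 1) * M := by
    have := hbound
    nlinarith [habs]
  have hcard : (S.card : ℝ) ≤ (l0norm s : ℝ) + (l0norm s' : ℝ) := by
    have hsub : S ⊆ (Finset.univ.filter fun j => s j ≠ 0) ∪ (Finset.univ.filter fun j => s' j ≠ 0) := by
      intro j hj
      simp only [hS, Finset.mem_filter, Finset.mem_univ, true_and, hx] at hj
      simp only [Finset.mem_union, Finset.mem_filter, Finset.mem_univ, true_and]
      by_contra h
      push_neg at h
      apply hj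
      simp [Pi.sub_apply, h.1, h.2]
    have := Finset.card_le_card hsub
    have h2 := Finset.card_union_le (Finset.univ.filter fun j => s j ≠ 0)
      (Finset.univ.filter fun j => s' j ≠ 0)
    unfold l0norm
    push_cast
    exact_mod_cast this.trans h2
  have hfinal : 1 + 1 / M ≤ (S.card : ℝ) := by
    have h : 1 / M ≤ (S.card : ℝ) - 1 := by
      rw [div_le_iff₀ hM]
      linarith [h1M]
    linarith
  linarith
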